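/- Let n ≥ 1, 1 ≤ m ≤ n, and p(z) = 1 − m^{m/2}·z_1⋯z_m. For r ∈ (0,1) let p_r(z) = p(rz) = 1 − m^{m/2} r^m z_1⋯z_m; p_r has no zeros on the closed unit ball, so p/p_r is holomorphic on a neighborhood of the closed unit ball. If α ≤ (2n + 1 − m)/2, then there exist C > 0 and r_0 ∈ (0,1) such that ‖p/p_r‖²_α ≤ C for all r ∈ (r_0, 1). -/

import Mathlib

open MeasureTheory
open scoped ENNReal Classical

noncomputable section

/-- The ambient space `ℂⁿ` with the Euclidean norm; the unit ball `𝔹ₙ` is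
`Metric.ball (0 : En n) 1` and the unit sphere `𝕊ₙ` is `Metric.sphere (0 : En n) 1`. -/
abbrev En (n : ℕ) := EuclideanSpace ℂ (Fin n)

/-- Lebesgue measure on `ℂⁿ`, transported along the definitional equality
`EuclideanSpace ℂ (Fin n) = (Fin n → ℂ)`. -/
noncomputable instance (n : ℕ) : MeasureSpace (En n) :=
  { volume := Measure.map (MeasurableEquiv.toLp 2 (Fin n → ℂ)) volume }

/-- `|k| = k₁ + … + kₙ` for a multi-index `k`. -/
def mOrd {n : ℕ} (k : Fin n → ℕ) : ℕ := ∑ i, k i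

/-- `k! = k₁! ⋯ kₙ!` for a multi-index `k`. -/
def mFact {n : ℕ} (k : Fin n → ℕ) : ℕ := ∏ i, (k i).factorial

/-- `z^k = z₁^{k₁} ⋯ zₙ^{kₙ}` for a multi-index `k`. -/
def mPow {n : ℕ} (z : En n) (k : Fin n → ℕ) : ℂ := ∏ i, z i ^ k i

/-- The weight `(n+|k|)^α · (n-1)!·k! / (n-1+|k|)!` appearing in the Dirichlet-type norm. -/
def dWeight (n : ℕ) (α : ℝ) (k : Fin n → ℕ) : ℝ :=
  ((n : ℝ) + mOrd k) ^ α * (((n - 1).factorial * mFact k : ℕ) : ℝ) /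
    (((n - 1 + mOrd k).factorial : ℕ) : ℝ)

/-- The squared Dirichlet-type norm `‖·‖²_α` of a family of Taylor coefficients,
valued in `[0,∞]`. -/
def Dnorm2 (n : ℕ) (α : ℝ) (a : (Fin n → ℕ) → ℂ) : ℝ≥0∞ :=
  ∑' k : Fin n → ℕ, ENNReal.ofReal (dWeight n α k * ‖a k‖ ^ 2)

/-- `a` is the family of power-series (Taylor) coefficients of `f` on the unit ball:
`f z = Σ_k a_k z^k` for every `z` in the ball. -/
def HasCoeffs (n : ℕ) (f : En n → ℂ) (a : (Fin n → ℕ) → ℂ) : Prop :=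
  ∀ z ∈ Metric.ball (0 : En n) 1, HasSum (fun k => a k * mPow z k) (f z)

/-- The squared Dirichlet-type norm `‖f‖²_α` of a function, computed through its
power-series coefficients (which are unique when they exist). -/
def DnormF2 (n : ℕ) (α : ℝ) (f : En n → ℂ) : ℝ≥0∞ :=
  sInf {x | ∃ a, HasCoeffs n f a ∧ x = Dnorm2 n α a}

/-- Membership in the Dirichlet-type space `D_α(𝔹ₙ)`. -/
def MemD (n : ℕ) (α : ℝ) (f : En n → ℂ) : Prop :=
  DifferentiableOn ℂ f (Metric.ball 0 1) ∧ ∃ a, HasCoeffs n f a ∧ Dnorm2 n α a < ⊤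

/-- `f` is a cyclic vector of `D_α(𝔹ₙ)`: for every `ε > 0` there is a polynomial `q`
with `‖q·f - 1‖²_α < ε`. -/
def CyclicD (n : ℕ) (α : ℝ) (f : En n → ℂ) : Prop :=
  ∀ ε : ℝ, 0 < ε → ∃ q : MvPolynomial (Fin n) ℂ,
    DnormF2 n α (fun z => MvPolynomial.eval (fun i => z i) q * f z - 1) < ENNReal.ofReal ε

/-- The model polynomial `p(z) = 1 - m^{m/2}·z₁ z₂ ⋯ z_m`, as a function on `ℂⁿ`. -/
def modelP (n m : ℕ) (hmn : m ≤ n) : En n → ℂ :=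
  fun z => 1 - ((((m : ℝ) ^ ((m : ℝ) / 2) : ℝ)) : ℂ) * ∏ i : Fin m, z (Fin.castLE hmn i)


namespace S11
open Real Finset

variable {n m : ℕ}

def eIdx (n m : ℕ) (j : ℕ) : Fin n → ℕ := fun i => if (i : ℕ) < m then j else 0

lemma filter_eq (hmn : m ≤ n) :
    Finset.univ.filter (fun i : Fin n => (i:ℕ) < m) =
      Finset.map (Fin.castLEEmb hmn) Finset.univ := by
  ext i
  simp only [mem_filter, mem_univ, true_and, mem_map]
  constructor
  · intro h; exact ⟨⟨i, h⟩, by simp [Fin.castLEEmb, Fin.castLE]⟩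
  · rintro ⟨a, rfl⟩; simp [Fin.castLEEmb, Fin.castLE]

lemma card_filter (hmn : m ≤ n) :
    (Finset.univ.filter (fun i : Fin n => (i:ℕ) < m)).card = m := by
  rw [filter_eq hmn, Finset.card_map, Finset.card_univ, Fintype.card_fin]

lemma sum_eIdx (hmn : m ≤ n) (j : ℕ) : ∑ i, eIdx n m j i = m * j := by
  unfold eIdx
  rw [← Finset.sum_filter, Finset.sum_const, card_filter hmn, smul_eq_mul]

lemma prod_fact_eIdx (hmn : m ≤ n) (j : ℕ) :
    ∏ i, (eIdx n m j i).factorial = j.factorial ^ m := by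
  unfold eIdx
  simp only [apply_ite Nat.factorial, Nat.factorial_zero]
  rw [← Finset.prod_filter, Finset.prod_const, card_filter hmn]

lemma prod_pow_eIdx (hmn : m ≤ n) (z : EuclideanSpace ℂ (Fin n)) (j : ℕ) :
    ∏ i, z i ^ eIdx n m j i = (∏ i : Fin m, z (Fin.castLE hmn i)) ^ j := by
  unfold eIdx
  simp only [pow_ite, pow_zero]
  rw [← Finset.prod_filter, filter_eq hmn, Finset.prod_map, ← Finset.prod_pow]
  rfl



lemma stirling_sqrt_pi_le {j : ℕ} (hj : 1 ≤ j) : Real.sqrt π ≤ Stirling.stirlingSeq j := by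
  obtain ⟨j, rfl⟩ := Nat.exists_eq_add_of_le hj
  have h := Stirling.stirlingSeq'_antitone.le_of_tendsto
    (Stirling.tendsto_stirlingSeq_sqrt_pi.comp (Filter.tendsto_add_atTop_nat 1)) j
  simpa [Nat.succ_eq_add_one, add_comm] using h

lemma stirling_le_one' {j : ℕ} (hj : 1 ≤ j) : Stirling.stirlingSeq j ≤ Stirling.stirlingSeq 1 := by
  obtain ⟨j, rfl⟩ := Nat.exists_eq_add_of_le hj
  have h := Stirling.stirlingSeq'_antitone (Nat.zero_le j)
  simpa [Nat.succ_eq_add_one, add_comm] using h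

lemma denom_pos {j : ℕ} (hj : 1 ≤ j) :
    0 < Real.sqrt (2 * j) * ((j : ℝ) / Real.exp 1) ^ j := by
  have hj' : (0:ℝ) < j := by exact_mod_cast hj
  positivity

lemma factorial_upper {j : ℕ} (hj : 1 ≤ j) :
    (j.factorial : ℝ) ≤ Stirling.stirlingSeq 1 * (Real.sqrt (2 * j) * ((j : ℝ) / Real.exp 1) ^ j) := by
  have h := stirling_le_one' hj
  rw [Stirling.stirlingSeq, div_le_iff₀ (denom_pos hj)] at h
  linarith [h]

lemma factorial_lower {j : ℕ} (hj : 1 ≤ j) :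
    Real.sqrt π * (Real.sqrt (2 * j) * ((j : ℝ) / Real.exp 1) ^ j) ≤ (j.factorial : ℝ) := by
  have h := stirling_sqrt_pi_le hj
  rw [Stirling.stirlingSeq, le_div_iff₀ (denom_pos hj)] at h
  linarith [h]



lemma key (n m : ℕ) (hn : 1 ≤ n) (hm : 1 ≤ m) (hmn : m ≤ n) (α : ℝ)
    (hα : α ≤ (2 * (n : ℝ) + 1 - m) / 2) :
    ∃ K : ℝ, 0 < K ∧ ∀ j : ℕ, 1 ≤ j →
      ((n:ℝ) + (m*j : ℕ)) ^ α * (((n-1).factorial * j.factorial ^ m : ℕ) : ℝ) /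
        (((n-1+m*j).factorial : ℕ) : ℝ) * (m:ℝ) ^ (m*j) ≤ K * j := by
  have hN : 1 ≤ (n:ℝ) := by exact_mod_cast hn
  have hM : 1 ≤ (m:ℝ) := by exact_mod_cast hm
  have hMN : (m:ℝ) ≤ n := by exact_mod_cast hmn
  set N := (n:ℝ) with hNdef
  set M := (m:ℝ) with hMdef
  set α' : ℝ := (2*N+1-M)/2 with hα'def
  have hα'0 : 0 ≤ α' := by rw [hα'def]; linarith
  set S₁ := Stirling.stirlingSeq 1 with hS₁def
  have hS₁ : 0 < S₁ := Stirling.stirlingSeq'_pos 0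
  have hπ : 0 < Real.sqrt π := Real.sqrt_pos.mpr Real.pi_pos
  set B := (((n-1).factorial : ℕ) : ℝ) with hBdef
  have hB : (0:ℝ) < B := by rw [hBdef]; exact_mod_cast (n-1).factorial_pos
  set K : ℝ := (N+M)^α' * B * S₁^m * 2^((M-1)/2) / Real.sqrt π with hKdef
  have hK : 0 < K := by rw [hKdef]; positivity
  have hKπ : K * Real.sqrt π = (N+M)^α' * B * S₁^m * 2^((M-1)/2) := by
    rw [hKdef, div_mul_cancel₀]
    exact ne_of_gt hπ
  refine ⟨K, hK, ?_⟩
  intro j hj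
  have hJ0 : (0:ℝ) < (j:ℝ) := by exact_mod_cast hj
  have hJ1 : (1:ℝ) ≤ (j:ℝ) := by exact_mod_cast hj
  set J := (j:ℝ) with hJdef
  set e1 := Real.exp 1 with he1def
  have he1 : 0 < e1 := Real.exp_pos 1
  have hmj : 1 ≤ m * j := Nat.mul_le_mul hm hj
  have hJM : (j:ℝ) ≤ (m:ℝ)*(j:ℝ) := le_mul_of_one_le_left hJ0.le hM
  have hMJcast : ((m*j : ℕ) : ℝ) = M * J := by push_cast; ring
  set W := Real.sqrt (2*J) with hWdef
  have hW0 : 0 < W := by rw [hWdef]; positivity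
  set A := (N + ((m*j:ℕ):ℝ)) ^ α with hAdef
  have hA0 : (0:ℝ) ≤ A := by rw [hAdef]; positivity
  set U := ((j.factorial : ℕ) : ℝ) with hUdef
  have hU0 : (0:ℝ) < U := by rw [hUdef]; exact_mod_cast j.factorial_pos
  set D := (((n-1+m*j).factorial : ℕ) : ℝ) with hDdef
  have hD0 : (0:ℝ) < D := by rw [hDdef]; exact_mod_cast (n-1+m*j).factorial_pos
  set Q := ((M*J)/e1)^(m*j) with hQdef
  have hQ0 : 0 < Q := by rw [hQdef]; positivity
  -- numerator bound
  have hU : U^m ≤ S₁^m * (W * (J/e1)^j)^m := by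
    rw [← mul_pow]
    exact pow_le_pow_left₀ (by positivity) (factorial_upper hj) m
  -- denominator bound
  have hDnat : (m*j).factorial * (m*j+1)^(n-1) ≤ (n-1+m*j).factorial := by
    have := Nat.factorial_mul_pow_le_factorial (m := m*j) (n := n-1)
    rwa [Nat.add_comm (m*j) (n-1)] at this
  have hfl := factorial_lower hmj
  rw [hMJcast] at hfl
  have hpow : J^(n-1) ≤ ((m*j+1 : ℕ):ℝ)^(n-1) := by
    apply pow_le_pow_left₀ hJ0.le
    push_cast
    linarith [hJM]
  have hL : Real.sqrt π * (Real.sqrt (2*(M*J)) * Q) * J^(n-1) ≤ D := by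
    calc Real.sqrt π * (Real.sqrt (2*(M*J)) * Q) * J^(n-1)
        ≤ ((m*j).factorial : ℝ) * ((m*j+1 : ℕ):ℝ)^(n-1) :=
          mul_le_mul hfl hpow (by positivity) (Nat.cast_nonneg _)
      _ ≤ D := by rw [hDdef]; exact_mod_cast hDnat
  have hsqrtMJ : W ≤ Real.sqrt (2*(M*J)) := by
    rw [hWdef]
    apply Real.sqrt_le_sqrt
    linarith [hJM]
  -- rpow facts
  have hn1 : ((n-1 : ℕ) : ℝ) = N - 1 := by
    rw [hNdef]; push_cast [Nat.cast_sub hn]; ring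
  have hm1 : ((m-1 : ℕ) : ℝ) = M - 1 := by
    rw [hMdef]; push_cast [Nat.cast_sub hm]; ring
  have hWeq : W^(m-1) = 2^((M-1)/2) * J^((M-1)/2) := by
    rw [hWdef, Real.sqrt_mul (by norm_num : (0:ℝ) ≤ 2), mul_pow,
      Real.sqrt_eq_rpow, Real.sqrt_eq_rpow,
      ← Real.rpow_natCast ((2:ℝ)^((1:ℝ)/2)) (m-1),
      ← Real.rpow_natCast (J^((1:ℝ)/2)) (m-1),
      ← Real.rpow_mul (by norm_num : (0:ℝ) ≤ 2),
      ← Real.rpow_mul hJ0.le, hm1]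
    rw [show (1:ℝ)/2*(M-1) = (M-1)/2 by ring]
  have hA' : A ≤ (N+M)^α' * J^α' := by
    have hMJ0 : (0:ℝ) ≤ M * J := by positivity
    have h1 : (1:ℝ) ≤ N + ((m*j:ℕ):ℝ) := by rw [hMJcast]; linarith
    rw [hAdef]
    calc (N + ((m*j:ℕ):ℝ)) ^ α ≤ (N + ((m*j:ℕ):ℝ)) ^ α' :=
          Real.rpow_le_rpow_of_exponent_le h1 (by rw [hα'def]; exact hα)
      _ ≤ ((N+M)*J)^α' := by
          have hNJ : N ≤ N * J := le_mul_of_one_le_right (by linarith) hJ1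
          have hexp : N + M*J ≤ (N+M)*J := by
            have hid : (N+M)*J = N*J + M*J := by ring
            linarith [hid, hNJ]
          exact Real.rpow_le_rpow (by linarith) (by rw [hMJcast]; exact hexp) hα'0
      _ = (N+M)^α' * J^α' := Real.mul_rpow (by linarith) hJ0.le
  have hJsplit : J^α' * J^((M-1)/2) = J * J^(n-1) := by
    rw [← Real.rpow_add hJ0]
    have : α' + (M-1)/2 = 1 + ((n-1:ℕ):ℝ) := by rw [hα'def, hn1]; ring
    rw [this, Real.rpow_add hJ0, Real.rpow_one, Real.rpow_natCast]
  -- clear denominator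
  have hcast : (((n-1).factorial * j.factorial ^ m : ℕ) : ℝ) = B * U^m := by
    rw [hBdef, hUdef]; push_cast; ring
  rw [div_mul_eq_mul_div, div_le_iff₀ hD0, hcast]
  have idQ : (W * (J/e1)^j)^m * M^(m*j) = W^m * Q := by
    rw [mul_pow, hQdef, ← pow_mul, mul_comm j m, mul_assoc, ← mul_pow]
    congr 2
    rw [div_mul_eq_mul_div, mul_comm J M]
  have hWm : W^m = W^(m-1) * W := by
    rw [← pow_succ]
    congr 1
    omega
  have core : A*B*S₁^m*W^m ≤ K*J*(Real.sqrt π)*(Real.sqrt (2*(M*J)))*J^(n-1) := by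
    calc A*B*S₁^m*W^m = (A*B*S₁^m*W^(m-1))*W := by rw [hWm]; ring
      _ ≤ (((N+M)^α' * J^α')*B*S₁^m*(2^((M-1)/2)*J^((M-1)/2)))*(Real.sqrt (2*(M*J))) := by
          rw [hWeq]
          have h2 : (0:ℝ) ≤ 2^((M-1)/2) * J^((M-1)/2) := by positivity
          gcongr
      _ = ((N+M)^α' * B * S₁^m * 2^((M-1)/2))*(J^α'*J^((M-1)/2))*(Real.sqrt (2*(M*J))) := by
          ring
      _ = K*(Real.sqrt π)*(J^α'*J^((M-1)/2))*(Real.sqrt (2*(M*J))) := by rw [hKπ]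
      _ = K*J*(Real.sqrt π)*(Real.sqrt (2*(M*J)))*J^(n-1) := by rw [hJsplit]; ring
  calc A * (B * U^m) * M^(m*j)
      ≤ A * (B * (S₁^m * (W * (J/e1)^j)^m)) * M^(m*j) := by gcongr
    _ = A*B*S₁^m*((W * (J/e1)^j)^m * M^(m*j)) := by ring
    _ = A*B*S₁^m*(W^m*Q) := by rw [idQ]
    _ = (A*B*S₁^m*W^m)*Q := by ring
    _ ≤ (K*J*(Real.sqrt π)*(Real.sqrt (2*(M*J)))*J^(n-1))*Q := by
        exact mul_le_mul_of_nonneg_right core hQ0.le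
    _ = (K*J)*(Real.sqrt π * (Real.sqrt (2*(M*J)) * Q) * J^(n-1)) := by ring
    _ ≤ (K*J)*D := by
        exact mul_le_mul_of_nonneg_left hL (by positivity)
    _ = K * J * D := by ring




lemma prod_norm_lt {n m : ℕ} (hm : 1 ≤ m) (hmn : m ≤ n) (z : En n) (hz : ‖z‖ < 1) :
    (m:ℝ) ^ ((m:ℝ)/2) * ‖∏ i : Fin m, z (Fin.castLE hmn i)‖ < 1 := by
  have hM : (1:ℝ) ≤ m := by exact_mod_cast hm
  have hM0 : (0:ℝ) < m := by linarith
  set q : Fin m → ℝ := fun i => ‖z (Fin.castLE hmn i)‖^2 with hqdef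
  have hq0 : ∀ i ∈ Finset.univ, 0 ≤ q i := fun i _ => sq_nonneg _
  have hS1 : ∑ i : Fin m, q i < 1 := by
    have h1 : ∑ i : Fin m, q i ≤ ∑ i : Fin n, ‖z i‖^2 := by
      have : ∑ i : Fin m, q i =
          ∑ i ∈ Finset.univ.filter (fun i : Fin n => (i:ℕ) < m), ‖z i‖^2 := by
        rw [show Finset.univ.filter (fun i : Fin n => (i:ℕ) < m) =
            Finset.map (Fin.castLEEmb hmn) Finset.univ from ?_, Finset.sum_map]
        · rfl
        · ext i
          simp only [mem_filter, mem_univ, true_and, mem_map]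
          constructor
          · intro h; exact ⟨⟨i, h⟩, by simp [Fin.castLEEmb, Fin.castLE]⟩
          · rintro ⟨a, rfl⟩; simp [Fin.castLEEmb, Fin.castLE]
      rw [this]
      exact Finset.sum_le_sum_of_subset_of_nonneg (Finset.filter_subset _ _)
        (fun i _ _ => sq_nonneg _)
    have h2 : ∑ i : Fin n, ‖z i‖^2 < 1 := by
      have := EuclideanSpace.norm_eq z
      nlinarith [norm_nonneg z, Real.sq_sqrt (show (0:ℝ) ≤ ∑ i : Fin n, ‖z i‖^2 from
        Finset.sum_nonneg fun i _ => sq_nonneg _), this]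
    linarith
  have hS0 : 0 ≤ ∑ i : Fin m, q i := Finset.sum_nonneg hq0
  -- AM-GM
  have hamgm := Real.geom_mean_le_arith_mean_weighted Finset.univ (fun _ => 1/(m:ℝ)) q
    (fun i _ => by positivity) (by simp; field_simp) hq0
  have hprod : ∏ i : Fin m, q i ≤ ((∑ i : Fin m, q i) / m)^m := by
    have hpow := pow_le_pow_left₀ (Finset.prod_nonneg fun i _ =>
      Real.rpow_nonneg (hq0 i (mem_univ i)) _) hamgm m
    calc ∏ i : Fin m, q i = (∏ i : Fin m, q i ^ ((1:ℝ)/m)) ^ m := by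
          rw [← Finset.prod_pow]
          apply Finset.prod_congr rfl
          intro i _
          rw [← Real.rpow_natCast (q i ^ ((1:ℝ)/m)) m, ← Real.rpow_mul (hq0 i (mem_univ i))]
          rw [show (1:ℝ)/m * m = 1 by field_simp, Real.rpow_one]
      _ ≤ (∑ i : Fin m, (1/(m:ℝ)) * q i) ^ m := hpow
      _ = ((∑ i : Fin m, q i) / m)^m := by rw [← Finset.mul_sum]; ring_nf
  have hlt : ∏ i : Fin m, q i < ((1:ℝ)/m)^m := by
    calc ∏ i : Fin m, q i ≤ ((∑ i : Fin m, q i) / m)^m := hprod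
      _ < ((1:ℝ)/m)^m := by
          apply pow_lt_pow_left₀ _ (by positivity) (by omega)
          rw [div_lt_div_iff₀ hM0 hM0]
          nlinarith
  -- convert to norm statement
  set w := ‖∏ i : Fin m, z (Fin.castLE hmn i)‖ with hwdef
  have hw0 : 0 ≤ w := norm_nonneg _
  have hw2 : w^2 = ∏ i : Fin m, q i := by
    rw [hwdef, norm_prod, ← Finset.prod_pow]
  set T := (m:ℝ) ^ ((m:ℝ)/2) with hTdef
  have hT0 : 0 < T := by rw [hTdef]; positivity
  have hT2 : T^2 = (m:ℝ)^m := by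
    rw [hTdef, ← Real.rpow_natCast ((m:ℝ)^((m:ℝ)/2)) 2, ← Real.rpow_mul (by positivity),
      ← Real.rpow_natCast (m:ℝ) m]
    congr 1
    push_cast
    ring
  have hfin : (T*w)^2 < 1 := by
    have : (T*w)^2 = (m:ℝ)^m * w^2 := by rw [mul_pow, hT2]
    rw [this, hw2]
    calc (m:ℝ)^m * ∏ i : Fin m, q i < (m:ℝ)^m * ((1:ℝ)/m)^m := by
          apply mul_lt_mul_of_pos_left hlt (by positivity)
      _ = 1 := by rw [← mul_pow]; field_simp; simp
  nlinarith [mul_nonneg hT0.le hw0]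


def coeffC (m : ℕ) (r : ℝ) (j : ℕ) : ℂ :=
  if j = 0 then 1 else ((((m:ℝ)^((m:ℝ)/2))^j * r^(m*(j-1)) * (r^m - 1) : ℝ) : ℂ)

def coeffA (n m : ℕ) (hn : 0 < n) (r : ℝ) (k : Fin n → ℕ) : ℂ :=
  if k = eIdx n m (k ⟨0, hn⟩) then coeffC m r (k ⟨0, hn⟩) else 0

lemma eIdx_app0 {n m : ℕ} (hn : 0 < n) (hm : 1 ≤ m) (j : ℕ) :
    eIdx n m j ⟨0, hn⟩ = j := by
  simp only [eIdx]
  rw [if_pos]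
  exact lt_of_lt_of_le Nat.zero_lt_one hm

lemma coeffA_eIdx {n m : ℕ} (hn : 0 < n) (hm : 1 ≤ m) (r : ℝ) (j : ℕ) :
    coeffA n m hn r (eIdx n m j) = coeffC m r j := by
  unfold coeffA
  rw [eIdx_app0 hn hm, if_pos rfl]

lemma eIdx_inj {n m : ℕ} (hn : 0 < n) (hm : 1 ≤ m) :
    Function.Injective (eIdx n m) := by
  intro a b h
  have := congrFun h ⟨0, hn⟩
  rwa [eIdx_app0 hn hm, eIdx_app0 hn hm] at this

lemma coeffA_eq_zero {n m : ℕ} (hn : 0 < n) {r : ℝ} {k : Fin n → ℕ}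
    (h : k ∉ Set.range (eIdx n m)) : coeffA n m hn r k = 0 := by
  unfold coeffA
  rw [if_neg]
  intro hc
  exact h ⟨k ⟨0, hn⟩, hc.symm⟩

lemma dWeight_eIdx {n m : ℕ} (hmn : m ≤ n) (α : ℝ) (j : ℕ) :
    dWeight n α (eIdx n m j) =
      ((n:ℝ) + ((m*j : ℕ) : ℝ))^α * (((n-1).factorial * j.factorial^m : ℕ) : ℝ) /
        (((n-1+m*j).factorial : ℕ) : ℝ) := by
  rw [dWeight, mOrd, mFact, sum_eIdx hmn, prod_fact_eIdx hmn]

lemma hasCoeffs_model {n m : ℕ} (hn : 1 ≤ n) (hm : 1 ≤ m) (hmn : m ≤ n) {r : ℝ}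
    (hr : r ∈ Set.Ioo (0:ℝ) 1) :
    HasCoeffs n (fun z => modelP n m hmn z / modelP n m hmn ((r : ℂ) • z))
      (coeffA n m hn r) := by
  intro z hz
  rw [mem_ball_zero_iff] at hz
  have hT0 : (0:ℝ) < (m:ℝ)^((m:ℝ)/2) := by
    have : (0:ℝ) < m := by exact_mod_cast hm
    positivity
  set T : ℂ := (((m:ℝ)^((m:ℝ)/2) : ℝ) : ℂ) with hTdef
  set w : ℂ := ∏ i : Fin m, z (Fin.castLE hmn i) with hwdef
  have hTw : (m:ℝ)^((m:ℝ)/2) * ‖w‖ < 1 := prod_norm_lt hm hmn z hz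
  have hr0 : 0 < r := hr.1
  have hr1 : r < 1 := hr.2
  have hrm1 : r^m ≤ 1 := pow_le_one₀ hr0.le hr1.le
  have hrm0 : 0 < r^m := pow_pos hr0 m
  set s : ℂ := T * ((r:ℝ) : ℂ)^m with hsdef
  have hnormT : ‖T‖ = (m:ℝ)^((m:ℝ)/2) := by
    rw [hTdef, Complex.norm_real, Real.norm_eq_abs, abs_of_nonneg hT0.le]
  have hsw : ‖s * w‖ < 1 := by
    rw [hsdef, norm_mul, norm_mul, hnormT, norm_pow, Complex.norm_real,
      Real.norm_eq_abs, abs_of_nonneg hr0.le]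
    calc (m:ℝ)^((m:ℝ)/2) * r^m * ‖w‖ ≤ (m:ℝ)^((m:ℝ)/2) * 1 * ‖w‖ := by
          apply mul_le_mul_of_nonneg_right _ (norm_nonneg w)
          apply mul_le_mul_of_nonneg_left hrm1 hT0.le
      _ = (m:ℝ)^((m:ℝ)/2) * ‖w‖ := by ring
      _ < 1 := hTw
  have hne : (1 : ℂ) - s * w ≠ 0 := by
    intro h
    have h1 : s * w = 1 := by
      have := sub_eq_zero.mp h
      exact this.symm
    rw [h1, norm_one] at hsw
    exact lt_irrefl 1 hsw
  have hgeo := hasSum_geometric_of_norm_lt_one hsw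
  have H1 : HasSum (fun j : ℕ => ((s - T) * w) * (s*w)^j)
      (((s - T) * w) * (1 - s*w)⁻¹) := hgeo.mul_left _
  have hterm : ∀ j : ℕ, ((s - T) * w) * (s*w)^j = coeffC m r (j+1) * w^(j+1) := by
    intro j
    rw [coeffC, if_neg (Nat.succ_ne_zero j)]
    rw [show (j+1-1 : ℕ) = j from rfl]
    push_cast
    rw [hsdef, hTdef]
    ring
  have H2 : HasSum (fun j : ℕ => coeffC m r (j+1) * w^(j+1))
      (((s - T) * w) * (1 - s*w)⁻¹) := by
    have := H1
    simp_rw [hterm] at this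
    exact this
  have H3 : HasSum (fun j : ℕ => coeffC m r j * w^j)
      ((((s - T) * w) * (1 - s*w)⁻¹) + ∑ i ∈ Finset.range 1, coeffC m r i * w^i) :=
    (hasSum_nat_add_iff 1).mp H2
  have hz2 : modelP n m hmn ((r:ℂ) • z) = 1 - s * w := by
    rw [modelP]
    have hp : ∏ i : Fin m, ((r:ℂ) • z) (Fin.castLE hmn i) = ((r:ℝ):ℂ)^m * w := by
      calc ∏ i : Fin m, ((r:ℂ) • z) (Fin.castLE hmn i)
          = ∏ i : Fin m, ((r:ℂ) * z (Fin.castLE hmn i)) := by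
            apply Finset.prod_congr rfl
            intro i _
            simp [PiLp.smul_apply, smul_eq_mul]
        _ = ((r:ℝ):ℂ)^m * w := by
            rw [Finset.prod_mul_distrib, Finset.prod_const, Finset.card_univ,
              Fintype.card_fin, hwdef]
    rw [hp, hsdef, hTdef]
    ring
  have hz1 : modelP n m hmn z = 1 - T * w := by
    rw [modelP, hTdef, hwdef]
  have hval : (((s - T) * w) * (1 - s*w)⁻¹) + ∑ i ∈ Finset.range 1, coeffC m r i * w^i
      = modelP n m hmn z / modelP n m hmn ((r:ℂ) • z) := by
    rw [Finset.range_one, Finset.sum_singleton]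
    rw [show coeffC m r 0 = 1 from if_pos rfl, pow_zero, mul_one]
    rw [hz1, hz2]
    field_simp
    ring
  rw [hval] at H3
  have hsupp : ∀ k, k ∉ Set.range (eIdx n m) →
      coeffA n m hn r k * mPow z k = 0 := by
    intro k hk
    rw [coeffA_eq_zero hn hk, zero_mul]
  apply (Function.Injective.hasSum_iff (eIdx_inj hn hm) hsupp).mp
  have hcomp : ∀ j : ℕ, coeffA n m hn r (eIdx n m j) * mPow z (eIdx n m j)
      = coeffC m r j * w^j := by
    intro j
    rw [coeffA_eIdx hn hm, mPow, prod_pow_eIdx hmn, hwdef]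
  simp only [Function.comp_def, hcomp]
  exact H3

end S11

/-- for the model polynomial `p(z) = 1 - m^{m/2} z₁⋯z_m` and its radial
dilations `p_r(z) = p(rz)`, if `α ≤ (2n+1-m)/2` then `‖p/p_r‖²_α` stays bounded as
`r → 1⁻`. -/
theorem stmt_11 (n m : ℕ) (hn : 1 ≤ n) (hm : 1 ≤ m) (hmn : m ≤ n) (α : ℝ)
    (hα : α ≤ (2 * (n : ℝ) + 1 - m) / 2) :
    ∃ C : ℝ, 0 < C ∧ ∃ r₀ ∈ Set.Ioo (0 : ℝ) 1, ∀ r ∈ Set.Ioo r₀ 1,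
      DnormF2 n α (fun z => modelP n m hmn z / modelP n m hmn ((r : ℂ) • z)) ≤
        ENNReal.ofReal C := by
  obtain ⟨K, hK, hkey⟩ := S11.key n m hn hm hmn α hα
  have hn0 : 0 < n := hn
  have hNα : (0:ℝ) < (n:ℝ)^α := Real.rpow_pos_of_pos (by exact_mod_cast hn) α
  refine ⟨(n:ℝ)^α + K, by positivity, 1/2, ⟨by norm_num, by norm_num⟩, ?_⟩
  intro r hr
  have hr' : r ∈ Set.Ioo (0:ℝ) 1 := ⟨by linarith [hr.1], hr.2⟩
  have hr0 : 0 < r := hr'.1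
  have hr1 : r < 1 := hr'.2
  set a := S11.coeffA n m hn0 r with hadef
  have hsupp : Function.support
      (fun k => ENNReal.ofReal (dWeight n α k * ‖a k‖^2)) ⊆ Set.range (S11.eIdx n m) := by
    intro k hk
    by_contra hcon
    apply hk
    simp only [hadef, S11.coeffA_eq_zero hn0 hcon, norm_zero]
    norm_num
  have hDle : DnormF2 n α (fun z => modelP n m hmn z / modelP n m hmn ((r:ℂ)•z)) ≤
      Dnorm2 n α a :=
    sInf_le ⟨a, S11.hasCoeffs_model hn hm hmn hr', rfl⟩
  refine le_trans hDle ?_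
  rw [Dnorm2, ← Function.Injective.tsum_eq (S11.eIdx_inj hn0 hm) hsupp]
  set x := r^(2*m) with hxdef
  have hx0 : 0 < x := by rw [hxdef]; positivity
  have hx1 : x < 1 := by
    rw [hxdef]
    exact pow_lt_one₀ hr0.le hr1 (by omega)
  have hxm : x ≤ r^m := by
    rw [hxdef, two_mul, pow_add]
    calc r^m * r^m ≤ 1 * r^m := by
          apply mul_le_mul_of_nonneg_right (pow_le_one₀ hr0.le hr1.le) (pow_nonneg hr0.le m)
      _ = r^m := one_mul _
  have hrm1 : r^m ≤ 1 := pow_le_one₀ hr0.le hr1.le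
  -- termwise bound
  set gr : ℕ → ℝ := fun j => if j = 0 then (n:ℝ)^α else K*j*x^(j-1)*(1-x)^2 with hgrdef
  have hterm : ∀ j : ℕ,
      ENNReal.ofReal (dWeight n α (S11.eIdx n m j) * ‖a (S11.eIdx n m j)‖^2) ≤
        ENNReal.ofReal (gr j) := by
    intro j
    apply ENNReal.ofReal_le_ofReal
    rw [hadef, S11.coeffA_eIdx hn0 hm]
    match j with
    | 0 =>
      have hw : dWeight n α (S11.eIdx n m 0) = (n:ℝ)^α := by
        rw [S11.dWeight_eIdx hmn, Nat.mul_zero, Nat.add_zero, Nat.factorial_zero,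
          Nat.one_pow, Nat.mul_one, Nat.cast_zero, add_zero, mul_div_assoc, div_self, mul_one]
        exact_mod_cast (Nat.factorial_pos (n-1)).ne'
      rw [hw, show S11.coeffC m r 0 = 1 from if_pos rfl, norm_one, one_pow, mul_one, hgrdef]
      simp
    | (j+1) =>
      rw [hgrdef]
      simp only [Nat.succ_ne_zero, if_false]
      have hc : ‖S11.coeffC m r (j+1)‖^2 =
          (m:ℝ)^(m*(j+1)) * (x^j * (1-r^m)^2) := by
        rw [S11.coeffC, if_neg (Nat.succ_ne_zero j)]
        rw [show (j+1-1) = j from rfl]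
        rw [Complex.norm_real, Real.norm_eq_abs, sq_abs]
        have hT2 : (((m:ℝ)^((m:ℝ)/2))^(j+1))^2 = (m:ℝ)^(m*(j+1)) := by
          rw [← pow_mul, ← Real.rpow_natCast ((m:ℝ)^((m:ℝ)/2)) ((j+1)*2),
            ← Real.rpow_mul (Nat.cast_nonneg m),
            ← Real.rpow_natCast (m:ℝ) (m*(j+1))]
          congr 1
          push_cast
          ring
        have hr2 : (r^(m*j))^2 = x^j := by
          rw [hxdef, ← pow_mul, ← pow_mul]
          congr 1
          ring
        calc (((m:ℝ)^((m:ℝ)/2))^(j+1) * r^(m*j) * (r^m-1))^2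
            = (((m:ℝ)^((m:ℝ)/2))^(j+1))^2 * (r^(m*j))^2 * (r^m-1)^2 := by ring
          _ = (m:ℝ)^(m*(j+1)) * (x^j * (1-r^m)^2) := by
              rw [hT2, hr2]; ring
      rw [hc, S11.dWeight_eIdx hmn]
      have hsq : (1-r^m)^2 ≤ (1-x)^2 := by
        apply pow_le_pow_left₀ (by linarith) (by linarith) 2
      have hxj : (0:ℝ) ≤ x^j := pow_nonneg hx0.le j
      have hb := hkey (j+1) (Nat.le_add_left 1 j)
      calc ((n:ℝ) + ((m*(j+1) : ℕ):ℝ))^α * (((n-1).factorial * (j+1).factorial^m : ℕ):ℝ) /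
            (((n-1+m*(j+1)).factorial : ℕ):ℝ) * ((m:ℝ)^(m*(j+1)) * (x^j * (1-r^m)^2))
          = (((n:ℝ) + ((m*(j+1) : ℕ):ℝ))^α * (((n-1).factorial * (j+1).factorial^m : ℕ):ℝ) /
            (((n-1+m*(j+1)).factorial : ℕ):ℝ) * (m:ℝ)^(m*(j+1))) * (x^j * (1-r^m)^2) := by
            ring
        _ ≤ (K * ((j+1 : ℕ):ℝ)) * (x^j * (1-x)^2) := by
            apply mul_le_mul hb _ (by positivity) (by positivity)
            exact mul_le_mul_of_nonneg_left hsq hxj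
        _ = K*((j+1:ℕ):ℝ)*x^((j+1)-1)*(1-x)^2 := by
            rw [show ((j+1)-1) = j from rfl]
            ring
  calc ∑' (j : ℕ), ENNReal.ofReal (dWeight n α (S11.eIdx n m j) * ‖a (S11.eIdx n m j)‖^2)
      ≤ ∑' (j : ℕ), ENNReal.ofReal (gr j) := ENNReal.tsum_le_tsum hterm
    _ ≤ ENNReal.ofReal ((n:ℝ)^α + K) := by
        rw [tsum_eq_zero_add' ENNReal.summable]
        have hgr0 : gr 0 = (n:ℝ)^α := by simp [hgrdef]
        have hx1' : (1:ℝ) - x ≠ 0 := by linarith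
        have habs : |x| < 1 := by rw [abs_of_nonneg hx0.le]; exact hx1
        have h1 : HasSum (fun j:ℕ => (j:ℝ) * x^j) (x/(1-x)^2) :=
          hasSum_coe_mul_geometric_of_norm_lt_one (by rwa [Real.norm_eq_abs])
        have h2 : HasSum (fun j:ℕ => x^j) (1-x)⁻¹ :=
          hasSum_geometric_of_norm_lt_one (by rwa [Real.norm_eq_abs])
        have h3 := (h1.add h2).mul_left (K*(1-x)^2)
        have h4 : HasSum (fun j:ℕ => gr (j+1)) K := by
          have heq : ∀ j : ℕ, gr (j+1) = K*(1-x)^2 * ((j:ℝ)*x^j + x^j) := by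
            intro j
            rw [hgrdef]
            simp only [Nat.succ_ne_zero, if_false]
            rw [show ((j+1)-1 : ℕ) = j from rfl]
            push_cast
            ring
          have hveq : K*(1-x)^2 * (x/(1-x)^2 + (1-x)⁻¹) = K := by
            field_simp
            ring
          rw [← hveq]
          exact HasSum.congr_fun h3 heq
        have h5 : ∑' (j : ℕ), ENNReal.ofReal (gr (j+1)) = ENNReal.ofReal K := by
          rw [← ENNReal.ofReal_tsum_of_nonneg _ h4.summable, h4.tsum_eq]
          intro j
          rw [hgrdef]
          simp only [Nat.succ_ne_zero, if_false]
          positivity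
        rw [hgr0, h5, ← ENNReal.ofReal_add hNα.le hK.le]
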